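/- Let Γ, Γ' be finite graphs and p a prime. If the pro-p completions of A(Γ) and A(Γ') are isomorphic, then Γ and Γ' have the same number of vertices and the same number of edges; indeed H^1 and H^2 of the completions with Z/p coefficients have ranks |V(Γ)| and |E(Γ)| respectively. -/

import Mathlib

open scoped commutatorElement in
/-- The defining relations of the right-angled Artin group on a graph `Γ`:
commutators of generators spanning an edge. -/
def raagRels {V : Type*} (Γ : SimpleGraph V) : Set (FreeGroup V) :=
  {r | ∃ v w : V, Γ.Adj v w ∧ r = ⁅FreeGroup.of v, FreeGroup.of w⁆}

/-- The right-angled Artin group `A(Γ)` of a graph `Γ`. -/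
def RAAG {V : Type*} (Γ : SimpleGraph V) : Type _ := PresentedGroup (raagRels Γ)

instance {V : Type*} (Γ : SimpleGraph V) : Group (RAAG Γ) :=
  QuotientGroup.Quotient.group _

/-- The generator of `A(Γ)` corresponding to a vertex. -/
def RAAG.gen {V : Type*} (Γ : SimpleGraph V) (v : V) : RAAG Γ :=
  PresentedGroup.of (rels := raagRels Γ) v

/-- The defining relations of the right-angled Coxeter group on a graph `Γ`:
edge commutators together with the squares of all generators. -/
def racgRels {V : Type*} (Γ : SimpleGraph V) : Set (FreeGroup V) :=
  raagRels Γ ∪ {r | ∃ v : V, r = (FreeGroup.of v) ^ 2}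

/-- The right-angled Coxeter group `C(Γ)` of a graph `Γ`. -/
def RACG {V : Type*} (Γ : SimpleGraph V) : Type _ := PresentedGroup (racgRels Γ)

instance {V : Type*} (Γ : SimpleGraph V) : Group (RACG Γ) :=
  QuotientGroup.Quotient.group _

/-- The generator of `C(Γ)` corresponding to a vertex. -/
def RACG.gen {V : Type*} (Γ : SimpleGraph V) (v : V) : RACG Γ :=
  PresentedGroup.of (rels := racgRels Γ) v

/-- A topological group is a pro-`p` group if it is a compact, Hausdorff, totally
disconnected topological group all of whose continuous finite quotients are `p`-groups. -/
structure IsProPGroup (p : ℕ) (K : Type*) [Group K] [TopologicalSpace K] : Prop where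
  topGroup : IsTopologicalGroup K
  compact : CompactSpace K
  t2 : T2Space K
  totallyDisconnected : TotallyDisconnectedSpace K
  quot_isPGroup : ∀ (N : Subgroup K) [N.Normal], IsOpen (N : Set K) → IsPGroup p (K ⧸ N)

/-- `ι : G →* K` exhibits the pro-`p` group `K` as the pro-`p` completion of the
discrete group `G`. -/
structure IsProPCompletion (p : ℕ) (G : Type*) [Group G] (K : Type*) [Group K]
    [TopologicalSpace K] (ι : G →* K) : Prop where
  proP : IsProPGroup p K
  dense : DenseRange ι
  universal : ∀ (F : Type) [Group F] [Finite F] [TopologicalSpace F] [DiscreteTopology F],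
    IsPGroup p F → ∀ f : G →* F, ∃! φ : K →* F, Continuous φ ∧ φ.comp ι = f

/-- The pull-back `P = {(g,h) ∈ G × H : ι g = π h}` of a pair of homomorphisms
`ι : G →* K`, `π : H →* K`, as a subgroup of `G × H`. -/
def extensionPullback {G H K : Type*} [Group G] [Group H] [Group K]
    (ι : G →* K) (π : H →* K) : Subgroup (G × H) where
  carrier := {x | ι x.1 = π x.2}
  one_mem' := by simp
  mul_mem' := by
    intro a b ha hb
    simp only [Set.mem_setOf_eq, Prod.fst_mul, Prod.snd_mul, map_mul] at *
    rw [ha, hb]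
  inv_mem' := by
    intro a ha
    simp only [Set.mem_setOf_eq, Prod.fst_inv, Prod.snd_inv, map_inv] at *
    rw [ha]
set_option linter.unusedSectionVars false
section ContinuousCohomology

/-- Composition with a map commutes with `Fin.contractNth` for compatible operations. -/
theorem comp_contractNth' {n : ℕ} {α β : Type*} (f : α → β) (op : α → α → α)
    (op' : β → β → β) (hf : ∀ x y, f (op x y) = op' (f x) (f y)) (j : Fin (n + 1))
    (g : Fin (n + 1) → α) :
    f ∘ Fin.contractNth j op g = Fin.contractNth j op' (f ∘ g) := by
  funext k
  simp only [Function.comp_apply, Fin.contractNth]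
  split_ifs <;> simp [hf]

/-- The (multiplicative) group structure that older Mathlib put on `AddAut A`
(multiplication is composition); current Mathlib makes `AddAut A` an additive group. -/
instance AddAut.group {A : Type*} [Add A] : Group (AddAut A) where
  mul g h := AddEquiv.trans h g
  one := AddEquiv.refl _
  inv := AddEquiv.symm
  mul_assoc _ _ _ := rfl
  one_mul _ := rfl
  mul_one _ := rfl
  inv_mul_cancel := AddEquiv.self_trans_symm

variable {K : Type*} [Group K] [TopologicalSpace K]
variable {M : Type*} [AddCommGroup M] [TopologicalSpace M] [IsTopologicalAddGroup M]

/-- The differential of the complex of inhomogeneous cochains of `K` with coefficients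
in `M`, the action being given by `ρ : K →* AddAut M`. -/
def cochainD (ρ : K →* AddAut M) (n : ℕ) (f : (Fin n → K) → M) : (Fin (n + 1) → K) → M :=
  fun g => ρ (g 0) (f fun i => g i.succ) +
    ∑ j : Fin (n + 1), ((-1 : ℤ) ^ ((j : ℕ) + 1)) • f (Fin.contractNth j (· * ·) g)

theorem cochainD_add (ρ : K →* AddAut M) (n : ℕ) (f g : (Fin n → K) → M) :
    cochainD ρ n (f + g) = cochainD ρ n f + cochainD ρ n g := by
  funext x
  simp only [cochainD, Pi.add_apply, map_add, smul_add, Finset.sum_add_distrib]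
  abel

theorem cochainD_zero (ρ : K →* AddAut M) (n : ℕ) :
    cochainD ρ n (0 : (Fin n → K) → M) = 0 := by
  funext x
  simp [cochainD]

theorem cochainD_neg (ρ : K →* AddAut M) (n : ℕ) (f : (Fin n → K) → M) :
    cochainD ρ n (-f) = -cochainD ρ n f := by
  funext x
  simp only [cochainD, Pi.neg_apply, map_neg, smul_neg, Finset.sum_neg_distrib]
  abel

/-- The continuous `n`-cocycles of `K` with coefficients in `(M, ρ)`. -/
def contCocycles (ρ : K →* AddAut M) (n : ℕ) : AddSubgroup ((Fin n → K) → M) where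
  carrier := {f | Continuous f ∧ cochainD ρ n f = 0}
  add_mem' := by
    rintro f g ⟨hfc, hfd⟩ ⟨hgc, hgd⟩
    exact ⟨hfc.add hgc, by rw [cochainD_add, hfd, hgd, add_zero]⟩
  zero_mem' := ⟨continuous_const, cochainD_zero ρ n⟩
  neg_mem' := by
    rintro f ⟨hfc, hfd⟩
    exact ⟨hfc.neg, by rw [cochainD_neg, hfd, neg_zero]⟩

/-- The continuous `n`-coboundaries of `K` with coefficients in `(M, ρ)`. -/
def contCoboundaries (ρ : K →* AddAut M) : (n : ℕ) → AddSubgroup ((Fin n → K) → M)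
  | 0 => ⊥
  | (n + 1) =>
    { carrier := {f | ∃ h : (Fin n → K) → M, Continuous h ∧ cochainD ρ n h = f}
      add_mem' := by
        rintro f g ⟨a, hac, had⟩ ⟨b, hbc, hbd⟩
        exact ⟨a + b, hac.add hbc, by rw [cochainD_add, had, hbd]⟩
      zero_mem' := ⟨0, continuous_const, cochainD_zero ρ n⟩
      neg_mem' := by
        rintro f ⟨a, hac, had⟩
        exact ⟨-a, hac.neg, by rw [cochainD_neg, had]⟩ }

/-- The continuous cohomology `Hⁿ(K; M)`: continuous cocycles modulo continuous
coboundaries. -/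
def contH (ρ : K →* AddAut M) (n : ℕ) : Type _ :=
  contCocycles ρ n ⧸ (contCoboundaries ρ n).addSubgroupOf (contCocycles ρ n)

noncomputable instance (ρ : K →* AddAut M) (n : ℕ) : AddCommGroup (contH ρ n) := by
  unfold contH; infer_instance

variable {G : Type*} [Group G] [TopologicalSpace G]

theorem cochainD_pull (ρ : K →* AddAut M) (φ : G →* K) (n : ℕ) (f : (Fin n → K) → M) :
    cochainD (ρ.comp φ) n (fun g => f (φ ∘ g)) = fun g => cochainD ρ n f (φ ∘ g) := by
  funext g
  simp only [cochainD, MonoidHom.comp_apply, Function.comp_apply]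
  congr 1
  exact Finset.sum_congr rfl fun j _ => by
    rw [← comp_contractNth' φ (· * ·) (· * ·) (fun x y => map_mul φ x y) j g]

/-- Pull-back of continuous cocycles along a continuous homomorphism. -/
def pullCocycles (ρ : K →* AddAut M) (φ : G →* K) (hφ : Continuous φ) (n : ℕ) :
    contCocycles ρ n →+ contCocycles (ρ.comp φ) n :=
  AddMonoidHom.mk'
    (fun f => ⟨fun g => f.1 (φ ∘ g),
      ⟨f.2.1.comp (continuous_pi fun i => hφ.comp (continuous_apply i)),
        by rw [cochainD_pull ρ φ n f.1]; funext g; rw [f.2.2]; rfl⟩⟩)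
    (fun a b => rfl)

/-- The map on continuous cohomology induced by a continuous homomorphism. -/
noncomputable def contHPull (ρ : K →* AddAut M) (φ : G →* K) (hφ : Continuous φ) (n : ℕ) :
    contH ρ n →+ contH (ρ.comp φ) n :=
  QuotientAddGroup.map _ _ (pullCocycles ρ φ hφ n) (by
    intro f hf
    rcases n with - | n
    · have h0 : f.1 = 0 := hf
      have : (pullCocycles ρ φ hφ 0 f).1 = 0 := by
        funext g; show f.1 (φ ∘ g) = 0; rw [h0]; rfl
      exact this
    · rcases hf with ⟨h, hc, hd⟩
      exact ⟨fun g => h (φ ∘ g),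
        hc.comp (continuous_pi fun i => hφ.comp (continuous_apply i)),
        by rw [cochainD_pull ρ φ n h]; funext g; rw [hd]; rfl⟩)

end ContinuousCohomology

section TrivCochain
variable {K : Type*} [Group K] [TopologicalSpace K]
variable {M : Type*} [AddCommGroup M] [TopologicalSpace M] [IsTopologicalAddGroup M]

theorem cochainD_one_one (h : (Fin 1 → K) → M) (g : Fin 2 → K) :
    cochainD (1 : K →* AddAut M) 1 h g
      = h (fun _ => g 1) - h (fun _ => g 0 * g 1) + h (fun _ => g 0) := by
  have e1 : (fun i : Fin 1 => g i.succ) = fun _ => g 1 := by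
    funext k; rw [Subsingleton.elim k 0]; rfl
  have e2 : Fin.contractNth (0 : Fin 2) (· * ·) g = fun _ => g 0 * g 1 := by
    funext k; rw [Subsingleton.elim k 0]; simp [Fin.contractNth]
  have e3 : Fin.contractNth (1 : Fin 2) (· * ·) g = fun _ => g 0 := by
    funext k; rw [Subsingleton.elim k 0]; simp [Fin.contractNth]
  simp [cochainD, Fin.sum_univ_two, e1, e2, e3, pow_succ]
  show (h fun _ => g 1) + _ = _
  abel

theorem cochainD_one_two (f : (Fin 2 → K) → M) (g : Fin 3 → K) :
    cochainD (1 : K →* AddAut M) 2 f g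
      = f ![g 1, g 2] - f ![g 0 * g 1, g 2] + f ![g 0, g 1 * g 2] - f ![g 0, g 1] := by
  have e1 : (fun i : Fin 2 => g i.succ) = ![g 1, g 2] := by
    funext k; fin_cases k <;> rfl
  have e2 : Fin.contractNth (0 : Fin 3) (· * ·) g = ![g 0 * g 1, g 2] := by
    funext k; fin_cases k <;> simp [Fin.contractNth] <;> rfl
  have e3 : Fin.contractNth (1 : Fin 3) (· * ·) g = ![g 0, g 1 * g 2] := by
    funext k; fin_cases k <;> simp [Fin.contractNth] <;> rfl
  have e4 : Fin.contractNth (2 : Fin 3) (· * ·) g = ![g 0, g 1] := by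
    funext k; fin_cases k <;> simp [Fin.contractNth] <;> rfl
  simp [cochainD, Fin.sum_univ_three, e1, e2, e3, e4, pow_succ]
  show f ![g 1, g 2] + _ = _
  abel

theorem pair_eta (g : Fin 2 → K) : g = ![g 0, g 1] := by
  funext i; fin_cases i <;> rfl

end TrivCochain
section RaagHoms
variable {V : Type} {Γ : SimpleGraph V}

theorem raag_lift_rels {G : Type*} [Group G] (f : V → G)
    (hf : ∀ v w, Γ.Adj v w → Commute (f v) (f w)) :
    ∀ r ∈ raagRels Γ, FreeGroup.lift f r = 1 := by
  rintro r ⟨v, w, hadj, rfl⟩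
  rw [map_commutatorElement]
  simp only [FreeGroup.lift_apply_of]
  exact commutatorElement_eq_one_iff_mul_comm.mpr (hf v w hadj)

/-- Lift a vertex labelling with commuting adjacent labels to a hom on the RAAG. -/
def raagHom {G : Type*} [Group G] (f : V → G)
    (hf : ∀ v w, Γ.Adj v w → Commute (f v) (f w)) : RAAG Γ →* G :=
  PresentedGroup.toGroup (raag_lift_rels f hf)

@[simp] theorem raagHom_gen {G : Type*} [Group G] (f : V → G)
    (hf : ∀ v w, Γ.Adj v w → Commute (f v) (f w)) (v : V) :
    raagHom f hf (RAAG.gen Γ v) = f v :=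
  PresentedGroup.toGroup.of _

theorem raag_hom_ext {G : Type*} [Group G] {φ ψ : RAAG Γ →* G}
    (h : ∀ v, φ (RAAG.gen Γ v) = ψ (RAAG.gen Γ v)) : φ = ψ :=
  PresentedGroup.ext h

open scoped commutatorElement in
theorem raag_gen_comm {v w : V} (h : Γ.Adj v w) :
    RAAG.gen Γ v * RAAG.gen Γ w = RAAG.gen Γ w * RAAG.gen Γ v := by
  have hr : ⁅FreeGroup.of v, FreeGroup.of w⁆ ∈ raagRels Γ := ⟨v, w, h, rfl⟩
  have h1 : (QuotientGroup.mk' (Subgroup.normalClosure (raagRels Γ)))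
      ⁅FreeGroup.of v, FreeGroup.of w⁆ = 1 := by
    rw [QuotientGroup.mk'_apply, QuotientGroup.eq_one_iff]
    exact Subgroup.subset_normalClosure hr
  rw [map_commutatorElement] at h1
  exact commutatorElement_eq_one_iff_mul_comm.mp h1

end RaagHoms
section Chars
variable {p : ℕ} [hp : Fact p.Prime]
variable {V : Type} [Fintype V] {Γ : SimpleGraph V}
variable {K : Type} [Group K] [TopologicalSpace K]
variable [TopologicalSpace (ZMod p)] [DiscreteTopology (ZMod p)]
variable {ι : RAAG Γ →* K}

/-- The multiplicative monoid hom attached to a continuous additive character. -/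
def mulChar (χ : K → ZMod p) (hχ : ∀ x y, χ (x * y) = χ x + χ y) :
    K →* Multiplicative (ZMod p) :=
  MonoidHom.mk' (fun k => Multiplicative.ofAdd (χ k)) (fun a b => by
    show Multiplicative.ofAdd (χ (a * b)) = _
    rw [hχ]; exact ofAdd_add _ _)

theorem multZMod_finite : Finite (Multiplicative (ZMod p)) := by
  haveI : NeZero p := ⟨hp.out.ne_zero⟩
  exact inferInstanceAs (Finite (ZMod p))

theorem multZMod_isPGroup : IsPGroup p (Multiplicative (ZMod p)) :=
  IsPGroup.of_card (n := 1) (by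
    rw [Nat.card_congr Multiplicative.toAdd, Nat.card_zmod, pow_one])

theorem char_exists (hK : IsProPCompletion p (RAAG Γ) K ι) (c : V → ZMod p) :
    ∃ χ : K → ZMod p, Continuous χ ∧ (∀ x y, χ (x * y) = χ x + χ y) ∧
      ∀ v, χ (ι (RAAG.gen Γ v)) = c v := by
  haveI := multZMod_finite (p := p)
  haveI : DiscreteTopology (Multiplicative (ZMod p)) :=
    inferInstanceAs (DiscreteTopology (ZMod p))
  set f : RAAG Γ →* Multiplicative (ZMod p) :=
    raagHom (fun v => Multiplicative.ofAdd (c v)) (fun v w _ => Commute.all _ _) with hf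
  obtain ⟨φ, ⟨hφc, hφι⟩, -⟩ := hK.universal (Multiplicative (ZMod p)) multZMod_isPGroup f
  refine ⟨fun k => Multiplicative.toAdd (φ k), ?_, ?_, ?_⟩
  · exact continuous_toAdd.comp hφc
  · intro x y
    show Multiplicative.toAdd (φ (x * y)) = _
    rw [map_mul]; exact toAdd_mul _ _
  · intro v
    have h2 := DFunLike.congr_fun hφι (RAAG.gen Γ v)
    simp only [MonoidHom.comp_apply] at h2
    show Multiplicative.toAdd (φ (ι (RAAG.gen Γ v))) = c v
    rw [h2, hf, raagHom_gen]
    rfl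

theorem char_ext (hK : IsProPCompletion p (RAAG Γ) K ι) {χ₁ χ₂ : K → ZMod p}
    (hc₁ : Continuous χ₁) (ha₁ : ∀ x y, χ₁ (x * y) = χ₁ x + χ₁ y)
    (hc₂ : Continuous χ₂) (ha₂ : ∀ x y, χ₂ (x * y) = χ₂ x + χ₂ y)
    (h : ∀ v, χ₁ (ι (RAAG.gen Γ v)) = χ₂ (ι (RAAG.gen Γ v))) : χ₁ = χ₂ := by
  haveI := multZMod_finite (p := p)
  haveI : DiscreteTopology (Multiplicative (ZMod p)) :=
    inferInstanceAs (DiscreteTopology (ZMod p))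
  set ψ₁ := mulChar χ₁ ha₁ with hψ₁
  set ψ₂ := mulChar χ₂ ha₂ with hψ₂
  have hcomp : ψ₁.comp ι = ψ₂.comp ι := by
    apply raag_hom_ext
    intro v
    simp only [MonoidHom.comp_apply]
    show Multiplicative.ofAdd (χ₁ _) = Multiplicative.ofAdd (χ₂ _)
    rw [h v]
  obtain ⟨φ, -, hu⟩ := hK.universal (Multiplicative (ZMod p)) multZMod_isPGroup (ψ₁.comp ι)
  have h1 : ψ₁ = φ := hu ψ₁ ⟨continuous_ofAdd.comp hc₁, rfl⟩
  have h2 : ψ₂ = φ := hu ψ₂ ⟨continuous_ofAdd.comp hc₂, hcomp.symm⟩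
  funext k
  have := DFunLike.congr_fun (h1.trans h2.symm) k
  exact congrArg Multiplicative.toAdd this

theorem card_chars (hK : IsProPCompletion p (RAAG Γ) K ι) :
    Nat.card {χ : K → ZMod p // Continuous χ ∧ ∀ x y, χ (x * y) = χ x + χ y}
      = p ^ Fintype.card V := by
  have hb : Function.Bijective
      (fun χ : {χ : K → ZMod p // Continuous χ ∧ ∀ x y, χ (x * y) = χ x + χ y} =>
        fun v => χ.1 (ι (RAAG.gen Γ v))) := by
    constructor
    · rintro ⟨χ₁, hc₁, ha₁⟩ ⟨χ₂, hc₂, ha₂⟩ h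
      exact Subtype.ext (char_ext hK hc₁ ha₁ hc₂ ha₂ fun v => congrFun h v)
    · intro c
      obtain ⟨χ, hc, ha, hv⟩ := char_exists hK c
      exact ⟨⟨χ, hc, ha⟩, funext hv⟩
  rw [Nat.card_eq_of_bijective _ hb, Nat.card_fun, Nat.card_zmod,
    Nat.card_eq_fintype_card]

end Chars
section H1
variable {K : Type*} [Group K] [TopologicalSpace K]
variable {M : Type*} [AddCommGroup M] [TopologicalSpace M] [IsTopologicalAddGroup M]

theorem cochainD_one_zero (h : (Fin 0 → K) → M) :
    cochainD (1 : K →* AddAut M) 0 h = 0 := by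
  funext g
  have e0 : (Fin.contractNth (0 : Fin 1) (· * ·) g) = (fun i => g i.succ) :=
    funext fun i => i.elim0
  simp only [cochainD, Fin.sum_univ_succ, Fin.sum_univ_zero, e0, Pi.zero_apply,
    Fin.val_zero, zero_add, pow_one, neg_smul, one_smul, add_zero,
    MonoidHom.one_apply, AddAut.one_apply]
  show (h fun i => g i.succ) + -h (fun i => g i.succ) = 0
  exact add_neg_cancel _

/-- The quotient map onto `H¹` is bijective: there are no nonzero 1-coboundaries. -/
theorem contH_one_mk_bijective :
    Function.Bijective (QuotientAddGroup.mk :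
      contCocycles (1 : K →* AddAut M) 1 → contH (1 : K →* AddAut M) 1) := by
  constructor
  · intro a b hab
    rw [QuotientAddGroup.eq] at hab
    rw [AddSubgroup.mem_addSubgroupOf] at hab
    obtain ⟨h, -, hd⟩ := hab
    have : ((-a + b : contCocycles (1 : K →* AddAut M) 1) : (Fin 1 → K) → M) = 0 := by
      rw [← hd, cochainD_one_zero]
    have h2 : (-a + b : contCocycles (1 : K →* AddAut M) 1) = 0 := Subtype.ext this
    have := neg_add_eq_zero.mp h2
    exact this
  · exact Quotient.exists_rep

theorem cocycle1_bijective_chars :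
    Function.Bijective (fun f : contCocycles (1 : K →* AddAut M) 1 =>
      (⟨fun k => f.1 (fun _ => k), f.2.1.comp (continuous_pi fun _ => continuous_id),
        by
          intro x y
          have h0 := congrFun f.2.2 ![x, y]
          rw [cochainD_one_one] at h0
          simp only [Matrix.cons_val_zero, Matrix.cons_val_one, Matrix.head_cons,
            Pi.zero_apply] at h0
          have key : f.1 (fun _ => x * y) = f.1 (fun _ => y) + f.1 (fun _ => x) := by
            apply eq_of_sub_eq_zero
            have e : f.1 (fun _ => x * y) - (f.1 (fun _ => y) + f.1 (fun _ => x))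
                = -(((f.1 fun _ => y) - f.1 fun _ => x * y) + f.1 fun _ => x) := by abel
            rw [e, h0, neg_zero]
          show f.1 (fun _ => x * y) = f.1 (fun _ => x) + f.1 (fun _ => y)
          rw [key]; exact add_comm _ _⟩ :
          {χ : K → M // Continuous χ ∧ ∀ x y, χ (x * y) = χ x + χ y})) := by
  constructor
  · intro a b hab
    have h1 := congrArg Subtype.val hab
    apply Subtype.ext
    funext u
    have hu : u = fun _ => u 0 := funext fun i => by rw [Subsingleton.elim i 0]
    rw [hu]
    exact congrFun h1 (u 0)
  · rintro ⟨χ, hc, ha⟩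
    refine ⟨⟨fun u => χ (u 0), hc.comp (continuous_apply 0), ?_⟩, ?_⟩
    · funext g
      rw [cochainD_one_one]
      show χ (g 1) - χ (g 0 * g 1) + χ (g 0) = 0
      rw [ha]; abel
    · apply Subtype.ext
      funext k
      rfl

theorem card_contH_one_eq_card_chars :
    Nat.card (contH (1 : K →* AddAut M) 1)
      = Nat.card {χ : K → M // Continuous χ ∧ ∀ x y, χ (x * y) = χ x + χ y} := by
  exact (Nat.card_eq_of_bijective _ (contH_one_mk_bijective (K := K) (M := M))).symm.trans
    (Nat.card_eq_of_bijective _ (cocycle1_bijective_chars (K := K) (M := M)))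

end H1

section H1count
variable {p : ℕ} [hp : Fact p.Prime]
variable {V : Type} [Fintype V] {Γ : SimpleGraph V}
variable {K : Type} [Group K] [TopologicalSpace K]
variable [TopologicalSpace (ZMod p)] [DiscreteTopology (ZMod p)] [IsTopologicalAddGroup (ZMod p)]
variable {ι : RAAG Γ →* K}

theorem card_contH_one (hK : IsProPCompletion p (RAAG Γ) K ι) :
    Nat.card (contH (1 : K →* AddAut (ZMod p)) 1) = p ^ Fintype.card V := by
  rw [card_contH_one_eq_card_chars, card_chars hK]

end H1count
section Transport
variable {M : Type*} [AddCommGroup M] [TopologicalSpace M] [IsTopologicalAddGroup M]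
variable {G K : Type*} [Group G] [TopologicalSpace G] [Group K] [TopologicalSpace K]

theorem cochainD_pull_one (φ : G →* K) (n : ℕ) (f : (Fin n → K) → M) :
    cochainD (1 : G →* AddAut M) n (fun g => f (φ ∘ g))
      = fun g => cochainD (1 : K →* AddAut M) n f (φ ∘ g) := by
  have h := cochainD_pull (1 : K →* AddAut M) φ n f
  rwa [MonoidHom.one_comp] at h

/-- Pull-back of cocycles along a hom, for trivial coefficients. -/
def pullCocycles1 (φ : G →* K) (hφ : Continuous φ) (n : ℕ) :
    contCocycles (1 : K →* AddAut M) n →+ contCocycles (1 : G →* AddAut M) n :=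
  AddMonoidHom.mk'
    (fun f => ⟨fun g => f.1 (φ ∘ g),
      ⟨f.2.1.comp (continuous_pi fun i => hφ.comp (continuous_apply i)),
        by rw [cochainD_pull_one φ n f.1]; funext g; rw [f.2.2]; rfl⟩⟩)
    (fun a b => rfl)

/-- Pull-back on continuous cohomology along a hom, for trivial coefficients. -/
noncomputable def contHPull1 (φ : G →* K) (hφ : Continuous φ) (n : ℕ) :
    contH (1 : K →* AddAut M) n →+ contH (1 : G →* AddAut M) n :=
  QuotientAddGroup.map _ _ (pullCocycles1 φ hφ n) (by
    intro f hf
    rcases n with - | n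
    · have h0 : f.1 = 0 := hf
      have : ((pullCocycles1 φ hφ 0 f : _) : (Fin 0 → G) → M) = 0 := by
        funext g; show f.1 (φ ∘ g) = 0; rw [h0]; rfl
      exact this
    · rcases hf with ⟨h, hc, hd⟩
      exact ⟨fun g => h (φ ∘ g),
        hc.comp (continuous_pi fun i => hφ.comp (continuous_apply i)),
        by rw [cochainD_pull_one φ n h]; funext g; rw [hd]; rfl⟩)

theorem contHPull1_mk (φ : G →* K) (hφ : Continuous φ) (n : ℕ)
    (f : contCocycles (1 : K →* AddAut M) n) :
    contHPull1 φ hφ n (QuotientAddGroup.mk f) = QuotientAddGroup.mk (pullCocycles1 φ hφ n f) :=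
  rfl

theorem card_contH_eq_of_iso (e : G ≃* K) (he : Continuous e) (he' : Continuous e.symm) (n : ℕ) :
    Nat.card (contH (1 : K →* AddAut M) n) = Nat.card (contH (1 : G →* AddAut M) n) := by
  have hgf : ∀ x : contH (1 : K →* AddAut M) n,
      contHPull1 (e.symm.toMonoidHom) he' n (contHPull1 (e.toMonoidHom) he n x) = x := by
    intro x
    induction x using QuotientAddGroup.induction_on with
    | H f =>
      erw [contHPull1_mk]
      congr 1
      exact Subtype.ext (funext fun g => congrArg f.1 (funext fun i =>
        e.apply_symm_apply (g i)))
  have hfg : ∀ x : contH (1 : G →* AddAut M) n,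
      contHPull1 (e.toMonoidHom) he n (contHPull1 (e.symm.toMonoidHom) he' n x) = x := by
    intro x
    induction x using QuotientAddGroup.induction_on with
    | H f =>
      erw [contHPull1_mk]
      congr 1
      exact Subtype.ext (funext fun g => congrArg f.1 (funext fun i =>
        e.symm_apply_apply (g i)))
  exact Nat.card_eq_of_bijective _
    (Function.bijective_iff_has_inverse.mpr
      ⟨contHPull1 (e.symm.toMonoidHom) he' n, hgf, hfg⟩)

end Transport
section Lift

theorem quot_discrete {L : Type*} [Group L] [TopologicalSpace L] [IsTopologicalGroup L]
    (N : Subgroup L) [N.Normal] (hN : IsOpen (N : Set L)) : DiscreteTopology (L ⧸ N) := by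
  apply discreteTopology_of_isOpen_singleton_one
  have h : ((QuotientGroup.mk '' N) : Set (L ⧸ N)) = {1} := by
    ext x
    simp only [Set.mem_image, Set.mem_singleton_iff, SetLike.mem_coe]
    constructor
    · rintro ⟨n, hn, rfl⟩; exact (QuotientGroup.eq_one_iff n).mpr hn
    · rintro rfl; exact ⟨1, N.one_mem, rfl⟩
  rw [← h]
  exact QuotientGroup.isOpenMap_coe _ hN

/-- In a compact totally disconnected Hausdorff group, every neighbourhood of `1`
contains an open normal subgroup. -/
theorem exists_openNormal_in_nhd {L : Type*} [Group L] [TopologicalSpace L]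
    [IsTopologicalGroup L] [CompactSpace L] [T2Space L] [TotallyDisconnectedSpace L]
    {U : Set L} (hU : U ∈ nhds (1 : L)) :
    ∃ N : OpenNormalSubgroup L, (N : Set L) ⊆ U := by
  obtain ⟨W, ⟨h1W, hWclopen⟩, hWU⟩ := (nhds_basis_clopen (1 : L)).mem_iff.mp hU
  obtain ⟨N, hN⟩ := IsTopologicalGroup.exist_openNormalSubgroup_sub_clopen_nhds_of_one hWclopen h1W
  exact ⟨N, hN.trans hWU⟩

/-- The pro-`p` completion is universal for maps to all pro-`p` groups, not just
finite ones. -/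
theorem IsProPCompletion.lift_pro {p : ℕ} {G K L : Type} [Group G] [Group K]
    [TopologicalSpace K] [Group L] [TopologicalSpace L] {ι : G →* K}
    (hK : IsProPCompletion p G K ι) (hL : IsProPGroup p L) (ψ : G →* L) :
    ∃ σ : K →* L, Continuous σ ∧ σ.comp ι = ψ := by
  haveI := hL.topGroup
  haveI := hL.compact
  haveI := hL.t2
  haveI := hL.totallyDisconnected
  haveI hdisc : ∀ N : OpenNormalSubgroup L, DiscreteTopology (L ⧸ (N : Subgroup L)) :=
    fun N => quot_discrete _ N.toOpenSubgroup.isOpen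
  haveI hfin : ∀ N : OpenNormalSubgroup L, Finite (L ⧸ (N : Subgroup L)) :=
    fun N => (N : Subgroup L).quotient_finite_of_isOpen N.toOpenSubgroup.isOpen
  have hex : ∀ N : OpenNormalSubgroup L, ∃! φ : K →* L ⧸ (N : Subgroup L),
      Continuous φ ∧ φ.comp ι = (QuotientGroup.mk' (N : Subgroup L)).comp ψ := fun N =>
    hK.universal (L ⧸ (N : Subgroup L))
      (hL.quot_isPGroup (N : Subgroup L) N.toOpenSubgroup.isOpen)
      ((QuotientGroup.mk' (N : Subgroup L)).comp ψ)
  set φ : ∀ N : OpenNormalSubgroup L, K →* L ⧸ (N : Subgroup L) :=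
    fun N => (hex N).choose with hφ
  have hφc : ∀ N, Continuous (φ N) := fun N => (hex N).choose_spec.1.1
  have hφι : ∀ N (g : G), φ N (ι g) = QuotientGroup.mk (ψ g) := fun N g =>
    DFunLike.congr_fun (hex N).choose_spec.1.2 g
  have hcompat : ∀ (N N' : OpenNormalSubgroup L) (hle : (N : Subgroup L) ≤ (N' : Subgroup L))
      (k : K), QuotientGroup.map (N : Subgroup L) (N' : Subgroup L) (MonoidHom.id L)
        (fun x hx => hle hx) (φ N k) = φ N' k := by
    intro N N' hle k
    have hcont : Continuous ((QuotientGroup.map (N : Subgroup L) (N' : Subgroup L)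
        (MonoidHom.id L) (fun x hx => hle hx)) ∘ (φ N)) :=
      Continuous.comp (continuous_of_discreteTopology
        (α := L ⧸ (N : Subgroup L)) (β := L ⧸ (N' : Subgroup L))) (hφc N)
    have := (hex N').choose_spec.2
      ((QuotientGroup.map (N : Subgroup L) (N' : Subgroup L) (MonoidHom.id L)
        (fun x hx => hle hx)).comp (φ N))
      ⟨hcont, by
        ext g
        simp only [MonoidHom.comp_apply]
        rw [hφι N g]; erw [QuotientGroup.map_mk]⟩
    exact DFunLike.congr_fun this k
  -- the coset system
  set C : K → OpenNormalSubgroup L → Set L :=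
    fun k N => {x : L | (QuotientGroup.mk x : L ⧸ (N : Subgroup L)) = φ N k} with hC
  have hCmono : ∀ (k : K) (N N' : OpenNormalSubgroup L),
      (N : Subgroup L) ≤ (N' : Subgroup L) → C k N ⊆ C k N' := by
    intro k N N' hle x hx
    have hx' : (QuotientGroup.mk x : L ⧸ (N : Subgroup L)) = φ N k := hx
    show (QuotientGroup.mk x : L ⧸ (N' : Subgroup L)) = φ N' k
    rw [← hcompat N N' hle k, ← hx']; erw [QuotientGroup.map_mk]
    rfl
  have hCclosed : ∀ k N, IsClosed (C k N) := fun k N =>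
    IsClosed.preimage QuotientGroup.continuous_mk isClosed_singleton
  have hCne : ∀ k N, (C k N).Nonempty := fun k N => by
    obtain ⟨x, hx⟩ := QuotientGroup.mk_surjective (φ N k)
    exact ⟨x, hx⟩
  have hCdir : ∀ k, Directed (· ⊇ ·) (C k) := fun k N N' =>
    ⟨N ⊓ N', hCmono k _ _ inf_le_left, hCmono k _ _ inf_le_right⟩
  have hmem_inter : ∀ k, ∃ x, ∀ N, x ∈ C k N := by
    intro k
    haveI : Nonempty (OpenNormalSubgroup L) :=
      ⟨⟨⟨⊤, isOpen_univ⟩, inferInstance⟩⟩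
    have := IsCompact.nonempty_iInter_of_directed_nonempty_isCompact_isClosed
      (C k) (hCdir k) (hCne k) (fun N => (hCclosed k N).isCompact) (hCclosed k)
    obtain ⟨x, hx⟩ := this
    exact ⟨x, fun N => Set.mem_iInter.mp hx N⟩
  have huniq : ∀ (x y : L), (∀ N : OpenNormalSubgroup L,
      (QuotientGroup.mk x : L ⧸ (N : Subgroup L)) = QuotientGroup.mk y) → x = y := by
    intro x y hxy
    by_contra hne
    have hz : x⁻¹ * y ≠ 1 := fun h => hne (inv_mul_eq_one.mp h)
    have hU : ({x⁻¹ * y}ᶜ : Set L) ∈ nhds (1 : L) :=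
      (isOpen_compl_singleton).mem_nhds (by simpa using (Ne.symm hz))
    obtain ⟨N, hN⟩ := exists_openNormal_in_nhd hU
    have hmem : x⁻¹ * y ∈ (N : Subgroup L) := QuotientGroup.eq.mp (hxy N)
    exact (hN hmem) rfl
  -- construct the section
  set σ0 : K → L := fun k => (hmem_inter k).choose with hσ0
  have hspec : ∀ (k : K) (N : OpenNormalSubgroup L), (QuotientGroup.mk (σ0 k) : L ⧸ (N : Subgroup L)) = φ N k :=
    fun k N => (hmem_inter k).choose_spec N
  have hmul : ∀ a b : K, σ0 (a * b) = σ0 a * σ0 b := by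
    intro a b
    apply huniq
    intro N
    rw [hspec (a * b) N]
    have : (QuotientGroup.mk (σ0 a * σ0 b) : L ⧸ (N : Subgroup L))
        = QuotientGroup.mk (σ0 a) * QuotientGroup.mk (σ0 b) := rfl
    rw [this, hspec a N, hspec b N, ← map_mul]
  set σ : K →* L := MonoidHom.mk' σ0 hmul with hσ
  have hσι : ∀ g : G, σ (ι g) = ψ g := by
    intro g
    apply huniq
    intro N
    show (QuotientGroup.mk (σ0 (ι g)) : L ⧸ (N : Subgroup L)) = _
    rw [hspec (ι g) N, hφι N g]
  have hσcont : Continuous σ := by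
    rw [continuous_iff_continuousAt]
    intro k
    intro U hU
    have hU1 : (fun x : L => σ0 k * x) ⁻¹' U ∈ nhds (1 : L) := by
      apply (continuous_mul_left (σ0 k)).continuousAt.preimage_mem_nhds
      rwa [mul_one]
    obtain ⟨N, hN⟩ := exists_openNormal_in_nhd hU1
    have hSnhds : (φ N) ⁻¹' {φ N k} ∈ nhds k :=
      ((hφc N).isOpen_preimage _ (isOpen_discrete _)).mem_nhds rfl
    rw [Filter.mem_map]
    refine Filter.mem_of_superset hSnhds ?_
    intro k' hk'
    show σ0 k' ∈ U
    have h1 : (QuotientGroup.mk (σ0 k) : L ⧸ (N : Subgroup L)) = QuotientGroup.mk (σ0 k') := by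
      rw [hspec k N, hspec k' N]
      exact (Set.mem_singleton_iff.mp hk').symm
    have h2 : (σ0 k)⁻¹ * σ0 k' ∈ (N : Subgroup L) := QuotientGroup.eq.mp h1
    have h3 : σ0 k * ((σ0 k)⁻¹ * σ0 k') ∈ U := hN h2
    rwa [mul_inv_cancel_left] at h3
  exact ⟨σ, hσcont, MonoidHom.ext hσι⟩

end Lift
section Extension

/-- A normalized 2-cocycle on a group. -/
structure GpCocycle (K : Type) [Group K] (M : Type) [AddCommGroup M] where
  c : K → K → M
  cocyc : ∀ x y z : K, c y z - c (x * y) z + c x (y * z) - c x y = 0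
  norm_left : ∀ x, c 1 x = 0
  norm_right : ∀ x, c x 1 = 0

namespace GpCocycle
variable {K M : Type} [Group K] [AddCommGroup M] (σ : GpCocycle K M)

theorem cocyc' (x y z : K) : σ.c x y + σ.c (x * y) z = σ.c y z + σ.c x (y * z) := by
  apply eq_of_sub_eq_zero
  have h : σ.c x y + σ.c (x * y) z - (σ.c y z + σ.c x (y * z))
      = -(σ.c y z - σ.c (x * y) z + σ.c x (y * z) - σ.c x y) := by abel
  rw [h, σ.cocyc x y z, neg_zero]

theorem inv_symm (x : K) : σ.c x⁻¹ x = σ.c x x⁻¹ := by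
  have h := σ.cocyc' x x⁻¹ x
  rw [mul_inv_cancel, inv_mul_cancel, σ.norm_left, σ.norm_right] at h
  exact ((add_right_cancel h).symm : _)

/-- The central extension of `K` by `M` determined by the cocycle. -/
def Ext (σ : GpCocycle K M) : Type := K × M

instance : Mul σ.Ext := ⟨fun a b => (a.1 * b.1, a.2 + b.2 + σ.c a.1 b.1)⟩
instance : One σ.Ext := ⟨((1 : K), (0 : M))⟩
instance : Inv σ.Ext := ⟨fun a => (a.1⁻¹, -a.2 - σ.c a.1 a.1⁻¹)⟩

theorem mul_def (a b : σ.Ext) : a * b = (a.1 * b.1, a.2 + b.2 + σ.c a.1 b.1) := rfl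
theorem one_def : (1 : σ.Ext) = ((1 : K), (0 : M)) := rfl

instance : Group σ.Ext where
  mul_assoc a b c := by
    show ((a.1 * b.1) * c.1, (a.2 + b.2 + σ.c a.1 b.1) + c.2 + σ.c (a.1 * b.1) c.1)
      = (a.1 * (b.1 * c.1), a.2 + (b.2 + c.2 + σ.c b.1 c.1) + σ.c a.1 (b.1 * c.1))
    have h := σ.cocyc' a.1 b.1 c.1
    refine Prod.ext (mul_assoc _ _ _) ?_
    show _ = _
    have : (a.2 + b.2 + σ.c a.1 b.1) + c.2 + σ.c (a.1 * b.1) c.1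
        = a.2 + b.2 + c.2 + (σ.c a.1 b.1 + σ.c (a.1 * b.1) c.1) := by abel
    rw [this, h]
    abel
  one_mul a := by
    show ((1 : K) * a.1, 0 + a.2 + σ.c 1 a.1) = a
    rw [one_mul, σ.norm_left, zero_add, add_zero]
    rfl
  mul_one a := by
    show (a.1 * 1, a.2 + 0 + σ.c a.1 1) = a
    rw [mul_one, σ.norm_right, add_zero, add_zero]
    rfl
  inv_mul_cancel a := by
    show (a.1⁻¹ * a.1, (-a.2 - σ.c a.1 a.1⁻¹) + a.2 + σ.c a.1⁻¹ a.1) = ((1 : K), (0 : M))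
    rw [inv_mul_cancel, σ.inv_symm]
    refine Prod.ext rfl ?_
    show (-a.2 - σ.c a.1 a.1⁻¹) + a.2 + σ.c a.1 a.1⁻¹ = 0
    abel

/-- Projection to the base group. -/
def fstHom : σ.Ext →* K := MonoidHom.mk' Prod.fst (fun _ _ => rfl)

theorem fstHom_surjective : Function.Surjective σ.fstHom := fun k => ⟨(k, 0), rfl⟩

theorem central_pow (z : σ.Ext) (hz : z.1 = 1) (m : ℕ) : z ^ m = ((1 : K), m • z.2) := by
  induction m with
  | zero => rw [pow_zero, zero_nsmul]; rfl
  | succ m ih =>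
    rw [pow_succ, ih]
    show ((1 : K) * z.1, m • z.2 + z.2 + σ.c 1 z.1) = ((1 : K), (m + 1) • z.2)
    rw [hz, one_mul, σ.norm_left, add_zero, succ_nsmul]

section Top
variable [TopologicalSpace K] [TopologicalSpace M]

instance : TopologicalSpace σ.Ext := inferInstanceAs (TopologicalSpace (K × M))

theorem ext_topGroup [IsTopologicalGroup K] [IsTopologicalAddGroup M]
    (hc : Continuous fun q : K × K => σ.c q.1 q.2) : IsTopologicalGroup σ.Ext where
  continuous_mul := by
    show Continuous fun q : σ.Ext × σ.Ext =>
      ((q.1.1 * q.2.1, q.1.2 + q.2.2 + σ.c q.1.1 q.2.1) : K × M)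
    refine Continuous.prodMk ?_ ?_
    · exact (continuous_fst.comp continuous_fst).mul (continuous_fst.comp continuous_snd)
    · exact ((continuous_snd.comp continuous_fst).add
        (continuous_snd.comp continuous_snd)).add
        (hc.comp (Continuous.prodMk (continuous_fst.comp continuous_fst)
          (continuous_fst.comp continuous_snd)))
  continuous_inv := by
    show Continuous fun a : σ.Ext => ((a.1⁻¹, -a.2 - σ.c a.1 a.1⁻¹) : K × M)
    refine Continuous.prodMk continuous_fst.inv ?_
    exact (continuous_snd.neg).sub
      (hc.comp (Continuous.prodMk continuous_fst continuous_fst.inv))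

end Top
end GpCocycle

theorem GpCocycle.ext_isProPGroup {p : ℕ} [Fact p.Prime] {K : Type} [Group K]
    [TopologicalSpace K] [TopologicalSpace (ZMod p)] [DiscreteTopology (ZMod p)]
    (σ : GpCocycle K (ZMod p)) (hc : Continuous fun q : K × K => σ.c q.1 q.2)
    (hKp : IsProPGroup p K) : IsProPGroup p σ.Ext := by
  haveI := hKp.topGroup
  haveI := hKp.compact
  haveI := hKp.t2
  haveI := hKp.totallyDisconnected
  haveI : NeZero p := ⟨(Fact.out : p.Prime).ne_zero⟩
  haveI : IsTopologicalAddGroup (ZMod p) :=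
    { continuous_add := continuous_of_discreteTopology
      continuous_neg := continuous_of_discreteTopology }
  refine ⟨σ.ext_topGroup hc, inferInstanceAs (CompactSpace (K × ZMod p)),
    inferInstanceAs (T2Space (K × ZMod p)),
    inferInstanceAs (TotallyDisconnectedSpace (K × ZMod p)), ?_⟩
  intro N hN hNopen
  set Mg : Subgroup K := N.map σ.fstHom with hMg
  haveI : Mg.Normal := Subgroup.Normal.map hN σ.fstHom σ.fstHom_surjective
  have hMgopen : IsOpen (Mg : Set K) := by
    have : (Mg : Set K) = Prod.fst '' (N : Set σ.Ext) := by
      rw [hMg]; rfl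
    rw [this]
    exact isOpenMap_fst _ hNopen
  have hKquot := hKp.quot_isPGroup Mg hMgopen
  set q : σ.Ext ⧸ N →* K ⧸ Mg :=
    QuotientGroup.map N Mg σ.fstHom (fun x hx => ⟨x, hx, rfl⟩) with hq
  have hker : ∀ y : σ.Ext ⧸ N, q y = 1 → y ^ p = 1 := by
    intro y hy
    obtain ⟨x, rfl⟩ := QuotientGroup.mk_surjective y
    rw [hq] at hy; erw [QuotientGroup.map_mk] at hy; rw [QuotientGroup.eq_one_iff] at hy
    obtain ⟨n, hn, hnx⟩ := hy
    have hz1 : (σ.fstHom) (x * n⁻¹) = 1 := by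
      rw [map_mul, map_inv, hnx, mul_inv_cancel]
    have hy2 : (QuotientGroup.mk x : σ.Ext ⧸ N) = QuotientGroup.mk (x * n⁻¹) := by
      rw [QuotientGroup.eq]
      have : x⁻¹ * (x * n⁻¹) = n⁻¹ := by group
      rw [this]
      exact N.inv_mem hn
    rw [hy2]
    have hpow : (x * n⁻¹) ^ p = 1 := by
      rw [σ.central_pow (x * n⁻¹) hz1 p]
      have hps : p • (x * n⁻¹).2 = (0 : ZMod p) := by
        rw [nsmul_eq_mul, ZMod.natCast_self, zero_mul]
      rw [hps]; rfl
    show (QuotientGroup.mk' N) (x * n⁻¹) ^ p = 1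
    rw [← map_pow, hpow, map_one]
  intro g
  obtain ⟨m, hm⟩ := hKquot (q g)
  refine ⟨m + 1, ?_⟩
  have h1 : q (g ^ p ^ m) = 1 := by rw [map_pow, hm]
  have := hker _ h1
  rw [pow_succ, pow_mul]
  exact this
section Split
variable {p : ℕ} [hp : Fact p.Prime]
variable {V : Type} [Fintype V] {Γ : SimpleGraph V}
variable {K : Type} [Group K] [TopologicalSpace K]
variable [TopologicalSpace (ZMod p)] [DiscreteTopology (ZMod p)] [IsTopologicalAddGroup (ZMod p)]
variable {ι : RAAG Γ →* K}

theorem split_of_sym (hK : IsProPCompletion p (RAAG Γ) K ι)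
    (f : (Fin 2 → K) → ZMod p) (hcont : Continuous f)
    (hz : cochainD (1 : K →* AddAut (ZMod p)) 2 f = 0)
    (hn1 : ∀ u : K, f ![1, u] = 0) (hn2 : ∀ u : K, f ![u, 1] = 0)
    (hsym : ∀ v w, Γ.Adj v w →
      f ![ι (RAAG.gen Γ v), ι (RAAG.gen Γ w)] = f ![ι (RAAG.gen Γ w), ι (RAAG.gen Γ v)]) :
    ∃ h : (Fin 1 → K) → ZMod p, Continuous h ∧
      cochainD (1 : K →* AddAut (ZMod p)) 1 h = f := by
  haveI hT2 : T2Space K := hK.proP.t2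
  -- the cocycle structure
  set σc : GpCocycle K (ZMod p) :=
    { c := fun u w => f ![u, w]
      cocyc := by
        intro x y z
        have h0 := congrFun hz ![x, y, z]
        rw [cochainD_one_two] at h0
        simpa using h0
      norm_left := fun u => hn1 u
      norm_right := fun u => hn2 u } with hσc
  have hc : Continuous fun q : K × K => σc.c q.1 q.2 := by
    apply hcont.comp
    apply continuous_pi
    intro i
    fin_cases i
    · exact continuous_fst
    · exact continuous_snd
  have hEp : IsProPGroup p σc.Ext := σc.ext_isProPGroup hc hK.proP
  -- lift of the RAAG into the extension
  set ψ : RAAG Γ →* σc.Ext :=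
    raagHom (fun v => ((ι (RAAG.gen Γ v), 0) : σc.Ext)) (by
      intro v w hadj
      show _ * _ = _ * _
      erw [σc.mul_def, σc.mul_def]
      refine Prod.ext ?_ ?_
      · show ι (RAAG.gen Γ v) * ι (RAAG.gen Γ w) = ι (RAAG.gen Γ w) * ι (RAAG.gen Γ v)
        rw [← map_mul, ← map_mul, raag_gen_comm hadj]
      · show (0 : ZMod p) + 0 + σc.c _ _ = (0 : ZMod p) + 0 + σc.c _ _
        congr 1
        exact hsym v w hadj) with hψ
  obtain ⟨σh, hσhc, hσhι⟩ := hK.lift_pro hEp ψ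
  have hψfst : ∀ g : RAAG Γ, (ψ g).1 = ι g := by
    have : σc.fstHom.comp ψ = ι := by
      apply raag_hom_ext
      intro v
      show (ψ (RAAG.gen Γ v)).1 = ι (RAAG.gen Γ v)
      rw [hψ]; erw [raagHom_gen]
    intro g
    exact DFunLike.congr_fun this g
  have hπσ : ∀ k : K, (σh k).1 = k := by
    have he : (σc.fstHom.comp σh : K →* K) = MonoidHom.id K := by
      have hagree : Set.EqOn (⇑(σc.fstHom.comp σh)) (⇑(MonoidHom.id K)) (Set.range ι) := by
        rintro - ⟨g, rfl⟩
        show (σh (ι g)).1 = ι g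
        have h3 : σh (ι g) = ψ g := by
          have := DFunLike.congr_fun hσhι g
          simpa only [MonoidHom.comp_apply] using this
        rw [h3, hψfst]
      have := Continuous.ext_on hK.dense
        (continuous_fst.comp hσhc) continuous_id hagree
      exact MonoidHom.ext fun k => congrFun this k
    intro k
    exact DFunLike.congr_fun he k
  -- extract the section's second coordinate
  set s : K → ZMod p := fun k => (σh k).2 with hs
  have hscont : Continuous s := continuous_snd.comp hσhc
  have hkey : ∀ a b : K, s (a * b) = s a + s b + f ![a, b] := by
    intro a b
    have h1 : σh (a * b) = σh a * σh b := map_mul σh a b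
    have h3 : (σh (a * b)).2 = (σh a).2 + (σh b).2 + σc.c (σh a).1 (σh b).1 :=
      congrArg Prod.snd h1
    show (σh (a * b)).2 = s a + s b + f ![a, b]
    rw [h3, hπσ a, hπσ b]
  refine ⟨fun u => -(s (u 0)), (hscont.comp (continuous_apply 0)).neg, ?_⟩
  funext g
  rw [cochainD_one_one]
  show -(s (g 1)) - -(s (g 0 * g 1)) + -(s (g 0)) = f g
  rw [hkey (g 0) (g 1)]
  have : f g = f ![g 0, g 1] := by rw [← pair_eta g]
  rw [this]
  abel

end Split
section H2
variable {p : ℕ} [hp : Fact p.Prime]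
variable {V : Type} [Fintype V] {Γ : SimpleGraph V} [DecidableRel Γ.Adj]
variable {K : Type} [Group K] [TopologicalSpace K]
variable [TopologicalSpace (ZMod p)] [DiscreteTopology (ZMod p)] [IsTopologicalAddGroup (ZMod p)]
variable {ι : RAAG Γ →* K}

set_option maxHeartbeats 1000000 in
theorem card_contH_two (hK : IsProPCompletion p (RAAG Γ) K ι) :
    Nat.card (contH (1 : K →* AddAut (ZMod p)) 2) = p ^ Γ.edgeFinset.card := by
  classical
  set gv : V → K := fun v => ι (RAAG.gen Γ v) with hgv
  choose x hxc hxa hxδ using fun v : V =>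
    char_exists hK (fun w => if v = w then (1 : ZMod p) else 0)
  have hx1 : ∀ v, x v 1 = 0 := by
    intro v
    have h := hxa v 1 1
    rw [one_mul] at h
    exact right_eq_add.mp h
  have hxg : ∀ a b : V, x a (gv b) = if a = b then 1 else 0 := fun a b => hxδ a b
  have hcomm : ∀ v w, Γ.Adj v w → gv v * gv w = gv w * gv v := by
    intro v w h
    rw [hgv]
    show ι _ * ι _ = ι _ * ι _
    rw [← map_mul, ← map_mul, raag_gen_comm h]
  -- edges
  set ea : {e : Sym2 V // e ∈ Γ.edgeFinset} → V := fun e => (Quot.out e.1).1 with hea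
  set eb : {e : Sym2 V // e ∈ Γ.edgeFinset} → V := fun e => (Quot.out e.1).2 with heb
  have hmk : ∀ e : {e : Sym2 V // e ∈ Γ.edgeFinset}, s(ea e, eb e) = e.1 :=
    fun e => Quot.out_eq e.1
  have hadj : ∀ e : {e : Sym2 V // e ∈ Γ.edgeFinset}, Γ.Adj (ea e) (eb e) := by
    intro e
    have h := SimpleGraph.mem_edgeFinset.mp e.2
    rw [← hmk e] at h
    exact (SimpleGraph.mem_edgeSet Γ).mp h
  have hnee : ∀ e : {e : Sym2 V // e ∈ Γ.edgeFinset}, ea e ≠ eb e := fun e => (hadj e).ne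
  -- cup products
  set cup : V → V → (Fin 2 → K) → ZMod p := fun a b g => x a (g 0) * x b (g 1) with hcup
  have hcupc : ∀ a b, Continuous (cup a b) := fun a b =>
    ((hxc a).comp (continuous_apply 0)).mul ((hxc b).comp (continuous_apply 1))
  have hcupz : ∀ a b, cochainD (1 : K →* AddAut (ZMod p)) 2 (cup a b) = 0 := by
    intro a b
    funext g
    rw [cochainD_one_two]
    show x a (g 1) * x b (g 2) - x a (g 0 * g 1) * x b (g 2)
      + x a (g 0) * x b (g 1 * g 2) - x a (g 0) * x b (g 1) = (0 : ZMod p)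
    rw [hxa a, hxa b]
    ring
  -- the linear family of cup cocycles
  set Λ : ({e : Sym2 V // e ∈ Γ.edgeFinset} → ZMod p) → (Fin 2 → K) → ZMod p :=
    fun l g => ∑ e : {e : Sym2 V // e ∈ Γ.edgeFinset}, l e * cup (ea e) (eb e) g with hΛ
  have hΛapp : ∀ l (u : Fin 2 → K),
      Λ l u = ∑ e : {e : Sym2 V // e ∈ Γ.edgeFinset}, l e * cup (ea e) (eb e) u :=
    fun l u => rfl
  have hΛc : ∀ l, Continuous (Λ l) := by
    intro l
    apply continuous_finset_sum
    intro e _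
    exact continuous_const.mul (hcupc (ea e) (eb e))
  have hΛz : ∀ l, cochainD (1 : K →* AddAut (ZMod p)) 2 (Λ l) = 0 := by
    intro l
    funext g
    rw [cochainD_one_two]
    rw [hΛapp, hΛapp, hΛapp, hΛapp, ← Finset.sum_sub_distrib, ← Finset.sum_add_distrib,
      ← Finset.sum_sub_distrib]
    apply Finset.sum_eq_zero
    intro e _
    have h2 := congrFun (hcupz (ea e) (eb e)) g
    rw [cochainD_one_two] at h2
    simp only [Pi.zero_apply] at h2
    linear_combination (l e) * h2
  -- antisymmetrization of 2-cochains
  set Af : ((Fin 2 → K) → ZMod p) → K → K → ZMod p :=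
    fun f u w => f ![u, w] - f ![w, u] with hAf
  have hAfd : ∀ (h : (Fin 1 → K) → ZMod p) (u w : K), u * w = w * u →
      Af (cochainD (1 : K →* AddAut (ZMod p)) 1 h) u w = 0 := by
    intro h u w hc
    show cochainD (1 : K →* AddAut (ZMod p)) 1 h ![u, w] - cochainD (1 : K →* AddAut (ZMod p)) 1 h ![w, u] = 0
    rw [cochainD_one_one, cochainD_one_one]
    show (h (fun _ => w) - h (fun _ => u * w) + h (fun _ => u))
      - (h (fun _ => u) - h (fun _ => w * u) + h (fun _ => w)) = 0
    rw [hc]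
    abel
  -- evaluation of cup products on pairs of generators
  have hcupAf : ∀ a b a' b' : V, a' ≠ b' → Af (cup a b) (gv a') (gv b')
      = (if a = a' ∧ b = b' then 1 else 0) - (if a = b' ∧ b = a' then 1 else 0) := by
    intro a b a' b' hne'
    show x a (gv a') * x b (gv b') - x a (gv b') * x b (gv a') = _
    rw [hxg a a', hxg a b', hxg b a', hxg b b']
    by_cases h1 : a = a' <;> by_cases h2 : b = b' <;> by_cases h3 : a = b' <;>
      by_cases h4 : b = a' <;> simp_all <;> ring
  have hΛAf : ∀ (l : {e : Sym2 V // e ∈ Γ.edgeFinset} → ZMod p) e₀,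
      Af (Λ l) (gv (ea e₀)) (gv (eb e₀)) = l e₀ := by
    intro l e₀
    show Λ l ![gv (ea e₀), gv (eb e₀)] - Λ l ![gv (eb e₀), gv (ea e₀)] = l e₀
    rw [hΛapp, hΛapp, ← Finset.sum_sub_distrib]
    rw [Finset.sum_eq_single_of_mem e₀ (Finset.mem_univ e₀)]
    · have h3 := hcupAf (ea e₀) (eb e₀) (ea e₀) (eb e₀) (hnee e₀)
      rw [if_pos ⟨rfl, rfl⟩, if_neg (fun hcon : ea e₀ = eb e₀ ∧ eb e₀ = ea e₀ => hnee e₀ hcon.1)] at h3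
      have h4 : cup (ea e₀) (eb e₀) ![gv (ea e₀), gv (eb e₀)]
          - cup (ea e₀) (eb e₀) ![gv (eb e₀), gv (ea e₀)] = 1 := by
        have h5 : Af (cup (ea e₀) (eb e₀)) (gv (ea e₀)) (gv (eb e₀))
            = cup (ea e₀) (eb e₀) ![gv (ea e₀), gv (eb e₀)]
              - cup (ea e₀) (eb e₀) ![gv (eb e₀), gv (ea e₀)] := rfl
        rw [← h5, h3]; ring
      linear_combination (l e₀) * h4
    · intro e _ hne₀
      have hc1 : ¬(ea e = ea e₀ ∧ eb e = eb e₀) := by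
        rintro ⟨h5, h6⟩
        apply hne₀
        apply Subtype.ext
        rw [← hmk e, ← hmk e₀, h5, h6]
      have hc2 : ¬(ea e = eb e₀ ∧ eb e = ea e₀) := by
        rintro ⟨h5, h6⟩
        apply hne₀
        apply Subtype.ext
        rw [← hmk e, ← hmk e₀]
        rw [h5, h6]
        exact Sym2.eq_swap
      have h3 := hcupAf (ea e) (eb e) (ea e₀) (eb e₀) (hnee e₀)
      rw [if_neg hc1, if_neg hc2] at h3
      have h5 : Af (cup (ea e) (eb e)) (gv (ea e₀)) (gv (eb e₀))
          = cup (ea e) (eb e) ![gv (ea e₀), gv (eb e₀)]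
            - cup (ea e) (eb e) ![gv (eb e₀), gv (ea e₀)] := rfl
      rw [h5] at h3
      linear_combination (l e) * h3
  -- matching lemma for the surjectivity correction
  have hΛmatch : ∀ (f : (Fin 2 → K) → ZMod p) (l : {e : Sym2 V // e ∈ Γ.edgeFinset} → ZMod p),
      (∀ e, l e = Af f (gv (ea e)) (gv (eb e))) → ∀ v w, Γ.Adj v w →
      Af (Λ l) (gv v) (gv w) = Af f (gv v) (gv w) := by
    intro f l hleq v w hvw
    have hmem₀ : s(v, w) ∈ Γ.edgeFinset :=
      SimpleGraph.mem_edgeFinset.mpr ((SimpleGraph.mem_edgeSet Γ).mpr hvw)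
    set e₀ : {e : Sym2 V // e ∈ Γ.edgeFinset} := ⟨s(v, w), hmem₀⟩ with he₀
    have h1 : s(ea e₀, eb e₀) = s(v, w) := hmk e₀
    have hanti : ∀ (F : (Fin 2 → K) → ZMod p) (u w' : K), Af F u w' = -(Af F w' u) := by
      intro F u w'
      show F ![u, w'] - F ![w', u] = -(F ![w', u] - F ![u, w'])
      ring
    rcases Sym2.eq_iff.mp h1 with ⟨ha, hb⟩ | ⟨ha, hb⟩
    · have h2 := hΛAf l e₀
      rw [ha, hb] at h2
      rw [h2, hleq e₀, ha, hb]
    · have h2 := hΛAf l e₀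
      rw [ha, hb] at h2
      rw [hanti (Λ l) (gv v) (gv w), h2, hleq e₀, ha, hb,
        hanti f (gv w) (gv v), neg_neg]
  -- normalization of 2-cocycles
  have hnl : ∀ f : (Fin 2 → K) → ZMod p, cochainD (1 : K →* AddAut (ZMod p)) 2 f = 0 → ∀ u, f ![1, u] = f ![1, 1] := by
    intro f hf u
    have h0 := congrFun hf ![1, 1, u]
    rw [cochainD_one_two] at h0
    simp only [Matrix.cons_val_zero, Matrix.cons_val_one, Matrix.head_cons,
      Matrix.cons_val_two, Matrix.tail_cons, one_mul, mul_one, Pi.zero_apply] at h0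
    linear_combination h0
  have hnr : ∀ f : (Fin 2 → K) → ZMod p, cochainD (1 : K →* AddAut (ZMod p)) 2 f = 0 → ∀ u, f ![u, 1] = f ![1, 1] := by
    intro f hf u
    have h0 := congrFun hf ![u, 1, 1]
    rw [cochainD_one_two] at h0
    simp only [Matrix.cons_val_zero, Matrix.cons_val_one, Matrix.head_cons,
      Matrix.cons_val_two, Matrix.tail_cons, one_mul, mul_one, Pi.zero_apply] at h0
    linear_combination -h0
  have hconst : ∀ m : ZMod p, ∃ h : (Fin 1 → K) → ZMod p,
      Continuous h ∧ cochainD (1 : K →* AddAut (ZMod p)) 1 h = (fun _ => m) := by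
    intro m
    refine ⟨fun _ => m, continuous_const, ?_⟩
    funext g
    rw [cochainD_one_one]
    show m - m + m = m
    ring
  -- the comparison map
  set ΛS : ({e : Sym2 V // e ∈ Γ.edgeFinset} → ZMod p) → contCocycles (1 : K →* AddAut (ZMod p)) 2 :=
    fun l => ⟨Λ l, hΛc l, hΛz l⟩ with hΛS
  set Φ : ({e : Sym2 V // e ∈ Γ.edgeFinset} → ZMod p) → contH (1 : K →* AddAut (ZMod p)) 2 :=
    fun l => QuotientAddGroup.mk (ΛS l) with hΦ
  have hinj : Function.Injective Φ := by
    intro l1 l2 h12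
    have hsub := AddSubgroup.mem_addSubgroupOf.mp (QuotientAddGroup.eq.mp h12)
    obtain ⟨h, hhc, hhd⟩ := hsub
    funext e
    have hval : ((-(ΛS l1) + ΛS l2 : contCocycles (1 : K →* AddAut (ZMod p)) 2) : (Fin 2 → K) → ZMod p)
        = fun g => Λ l2 g - Λ l1 g := by
      funext g
      show -(Λ l1 g) + Λ l2 g = Λ l2 g - Λ l1 g
      ring
    have hAf0 : Af (fun g => Λ l2 g - Λ l1 g) (gv (ea e)) (gv (eb e)) = 0 := by
      have h6 := hAfd h (gv (ea e)) (gv (eb e)) (hcomm _ _ (hadj e))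
      rw [hhd, hval] at h6
      exact h6
    have hsplitAf : Af (fun g => Λ l2 g - Λ l1 g) (gv (ea e)) (gv (eb e))
        = Af (Λ l2) (gv (ea e)) (gv (eb e)) - Af (Λ l1) (gv (ea e)) (gv (eb e)) := by
      show (Λ l2 _ - Λ l1 _) - (Λ l2 _ - Λ l1 _)
        = (Λ l2 _ - Λ l2 _) - (Λ l1 _ - Λ l1 _)
      ring
    rw [hsplitAf, hΛAf l2 e, hΛAf l1 e] at hAf0
    exact (sub_eq_zero.mp hAf0).symm
  have hsurj : Function.Surjective Φ := by
    intro y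
    induction y using QuotientAddGroup.induction_on with
    | H F =>
      set m : ZMod p := F.1 ![1, 1] with hm
      set f : (Fin 2 → K) → ZMod p := fun g => F.1 g - m with hfdef
      set l : {e : Sym2 V // e ∈ Γ.edgeFinset} → ZMod p :=
        fun e => Af f (gv (ea e)) (gv (eb e)) with hl
      refine ⟨l, ?_⟩
      show QuotientAddGroup.mk (ΛS l) = QuotientAddGroup.mk F
      rw [QuotientAddGroup.eq]
      rw [AddSubgroup.mem_addSubgroupOf]
      set f₁ : (Fin 2 → K) → ZMod p := fun g => f g - Λ l g with hf1
      have e1 : ∀ u : Fin 2 → K, f₁ u = F.1 u - m - Λ l u := fun u => rfl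
      have hFz : cochainD (1 : K →* AddAut (ZMod p)) 2 F.1 = 0 := F.2.2
      have hf₁c : Continuous f₁ := (F.2.1.sub continuous_const).sub (hΛc l)
      have hf₁z : cochainD (1 : K →* AddAut (ZMod p)) 2 f₁ = 0 := by
        funext g
        rw [cochainD_one_two]
        have h2 := congrFun hFz g
        rw [cochainD_one_two] at h2
        have h3 := congrFun (hΛz l) g
        rw [cochainD_one_two] at h3
        simp only [Pi.zero_apply] at h2 h3
        simp only [e1, Pi.zero_apply]
        linear_combination h2 - h3
      have hΛ1 : ∀ u : K, Λ l ![1, u] = 0 := by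
        intro u
        rw [hΛapp]
        apply Finset.sum_eq_zero
        intro e _
        show l e * (x (ea e) 1 * x (eb e) u) = 0
        rw [hx1]
        ring
      have hΛ2 : ∀ u : K, Λ l ![u, 1] = 0 := by
        intro u
        rw [hΛapp]
        apply Finset.sum_eq_zero
        intro e _
        show l e * (x (ea e) u * x (eb e) 1) = 0
        rw [hx1]
        ring
      have hf₁n1 : ∀ u : K, f₁ ![1, u] = 0 := by
        intro u
        rw [e1, hΛ1, hnl F.1 hFz u, ← hm]
        ring
      have hf₁n2 : ∀ u : K, f₁ ![u, 1] = 0 := by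
        intro u
        rw [e1, hΛ2, hnr F.1 hFz u, ← hm]
        ring
      have hf₁sym : ∀ v w, Γ.Adj v w → f₁ ![gv v, gv w] = f₁ ![gv w, gv v] := by
        intro v w hvw
        apply sub_eq_zero.mp
        have h5 : f₁ ![gv v, gv w] - f₁ ![gv w, gv v]
            = (Af f (gv v) (gv w)) - (Af (Λ l) (gv v) (gv w)) := by
          rw [e1, e1]
          show (F.1 _ - m - Λ l _) - (F.1 _ - m - Λ l _)
            = (f _ - f _) - (Λ l _ - Λ l _)
          rw [hfdef]
          show (F.1 _ - m - Λ l _) - (F.1 _ - m - Λ l _)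
            = ((F.1 _ - m) - (F.1 _ - m)) - (Λ l _ - Λ l _)
          ring
        rw [h5, hΛmatch f l (fun e => rfl) v w hvw, sub_self]
      obtain ⟨h, hhcont, hhd⟩ := split_of_sym hK f₁ hf₁c hf₁z
        hf₁n1 hf₁n2 (fun v w hvw => hf₁sym v w hvw)
      obtain ⟨h', hmc, hmd⟩ := hconst m
      refine ⟨h + h', hhcont.add hmc, ?_⟩
      rw [cochainD_add]
      rw [hhd, hmd]
      funext g
      show f₁ g + m = -(Λ l g) + F.1 g
      rw [e1]
      ring
  have hbij : Function.Bijective Φ := ⟨hinj, hsurj⟩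
  rw [← Nat.card_eq_of_bijective Φ hbij, Nat.card_fun, Nat.card_zmod,
    Nat.card_eq_fintype_card, Fintype.card_coe]

end H2
/-- If the pro-`p` completions of `A(Γ)` and `A(Γ')` are isomorphic
(as topological groups), then `Γ` and `Γ'` have the same numbers of vertices and edges;
indeed the continuous cohomology groups `H¹` and `H²` of the pro-`p` completion with
trivial `ℤ/p` coefficients have orders `p^{|V(Γ)|}` and `p^{|E(Γ)|}` (i.e. ranks
`|V(Γ)|` and `|E(Γ)|`) respectively. -/
theorem proP_completion_detects_vertices_and_edges {V V' : Type} [Fintype V] [Fintype V']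
    (Γ : SimpleGraph V) (Γ' : SimpleGraph V')
    [DecidableRel Γ.Adj] [DecidableRel Γ'.Adj] (p : ℕ) [Fact p.Prime]
    (K K' : Type) [Group K] [TopologicalSpace K] [Group K'] [TopologicalSpace K']
    (ι : RAAG Γ →* K) (ι' : RAAG Γ' →* K')
    (hK : IsProPCompletion p (RAAG Γ) K ι) (hK' : IsProPCompletion p (RAAG Γ') K' ι')
    [TopologicalSpace (ZMod p)] [DiscreteTopology (ZMod p)]
    [IsTopologicalAddGroup (ZMod p)]
    (hiso : ∃ e : K ≃* K', Continuous e ∧ Continuous e.symm) :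
    Fintype.card V = Fintype.card V' ∧ Γ.edgeFinset.card = Γ'.edgeFinset.card ∧
    Nat.card (contH (1 : K →* AddAut (ZMod p)) 1) = p ^ Fintype.card V ∧
    Nat.card (contH (1 : K →* AddAut (ZMod p)) 2) = p ^ Γ.edgeFinset.card := by
  obtain ⟨e, hec, hec'⟩ := hiso
  have h1K : Nat.card (contH (1 : K →* AddAut (ZMod p)) 1) = p ^ Fintype.card V :=
    card_contH_one hK
  have h2K : Nat.card (contH (1 : K →* AddAut (ZMod p)) 2) = p ^ Γ.edgeFinset.card :=
    card_contH_two hK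
  have h1K' : Nat.card (contH (1 : K' →* AddAut (ZMod p)) 1) = p ^ Fintype.card V' :=
    card_contH_one hK'
  have h2K' : Nat.card (contH (1 : K' →* AddAut (ZMod p)) 2) = p ^ Γ'.edgeFinset.card :=
    card_contH_two hK'
  have ht1 := card_contH_eq_of_iso (M := ZMod p) e hec hec' 1
  have ht2 := card_contH_eq_of_iso (M := ZMod p) e hec hec' 2
  have hp2 : 2 ≤ p := (Fact.out : p.Prime).two_le
  have hv : Fintype.card V = Fintype.card V' := by
    apply Nat.pow_right_injective hp2
    show p ^ Fintype.card V = p ^ Fintype.card V'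
    rw [← h1K, ← h1K', ht1]
  have hedge : Γ.edgeFinset.card = Γ'.edgeFinset.card := by
    apply Nat.pow_right_injective hp2
    show p ^ Γ.edgeFinset.card = p ^ Γ'.edgeFinset.card
    rw [← h2K, ← h2K', ht2]
  exact ⟨hv, hedge, h1K, h2K⟩
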